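/- Let J be an interval, l > 0, and v : J → H continuous such that t ↦ ‖v(t)‖^l v(t) is continuously differentiable on J. Then t ↦ ‖v(t)‖^(l+2) is continuously differentiable on J and for all t ∈ J, ⟨(d/dt)(‖v(t)‖^l v(t)), v(t)⟩ = (d/dt)[((l+1)/(l+2)) ‖v(t)‖^(l+2)]. -/

import Mathlib

open RealInnerProductSpace Real Asymptotics Filter

theorem stmt_9 {H : Type*} [NormedAddCommGroup H] [InnerProductSpace ℝ H]
    [FiniteDimensional ℝ H]
    (J : Set ℝ) (hJ : J.OrdConnected) (l : ℝ) (hl : 0 < l)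
    (v : ℝ → H) (hv : ContinuousOn v J)
    (ψ' : ℝ → H)
    (hψ : ∀ t ∈ J, HasDerivWithinAt (fun t => ‖v t‖ ^ l • v t) (ψ' t) J t)
    (hψ'c : ContinuousOn ψ' J) :
    ∃ E' : ℝ → ℝ, ContinuousOn E' J ∧
      (∀ t ∈ J, HasDerivWithinAt (fun t => ‖v t‖ ^ (l + 2)) (E' t) J t) ∧
      ∀ t ∈ J, ⟪ψ' t, v t⟫ = ((l + 1) / (l + 2)) * E' t := by
  have hl1 : (0:ℝ) < l + 1 := by linarith
  have hl2 : (0:ℝ) < l + 2 := by linarith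
  -- norm of ψ s
  have hnψ : ∀ s, ‖‖v s‖ ^ l • v s‖ = ‖v s‖ ^ (l + 1) := by
    intro s
    rw [norm_smul, Real.norm_of_nonneg (Real.rpow_nonneg (norm_nonneg _) _)]
    rcases eq_or_ne ‖v s‖ 0 with h | h
    · rw [h, Real.zero_rpow hl.ne', Real.zero_rpow hl1.ne', zero_mul]
    · rw [Real.rpow_add_one h]
  refine ⟨fun t => (l + 2) / (l + 1) * ⟪ψ' t, v t⟫, ?_, ?_, ?_⟩
  · exact continuousOn_const.mul (hψ'c.inner hv)
  · intro t ht
    by_cases hvt : v t = 0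
    · -- v t = 0 : derivative is 0 via little-o estimate
      have hO : (fun s => ‖v s‖ ^ (l+1)) =O[nhdsWithin t J] (fun s => ‖s - t‖) := by
        have h1 := (hψ t ht).hasFDerivWithinAt.isBigO_sub
        have h2 := h1.norm_norm
        simpa [hvt, hnψ] using h2
      set r := (l+2)/(l+1) with hr
      have hr1 : 1 < r := by rw [hr, lt_div_iff₀ hl1]; linarith
      have hO2 : (fun s => (‖v s‖ ^ (l+1)) ^ r) =O[nhdsWithin t J] (fun s => ‖s - t‖ ^ r) :=
        hO.rpow (by linarith) (Eventually.of_forall fun s => norm_nonneg _)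
      have ho : (fun s : ℝ => ‖s - t‖ ^ r) =o[nhdsWithin t J] (fun s => s - t) := by
        have h0 : Tendsto (fun s : ℝ => ‖s - t‖) (nhdsWithin t J) (nhds 0) := by
          have hcont : Continuous (fun s : ℝ => ‖s - t‖) :=
            (continuous_id.sub continuous_const).norm
          have := (hcont.continuousWithinAt (s := J) (x := t)).tendsto
          simpa using this
        have htend : Tendsto (fun s : ℝ => ‖s - t‖ ^ (r - 1)) (nhdsWithin t J) (nhds 0) := by
          have hc : ContinuousAt (fun x : ℝ => x ^ (r-1)) 0 :=
            Real.continuousAt_rpow_const 0 (r-1) (Or.inr (by linarith))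
          have := hc.tendsto.comp h0
          simpa [Function.comp_def, Real.zero_rpow (by linarith : r - 1 ≠ 0)] using this
        have h1 : (fun s : ℝ => ‖s - t‖ ^ (r-1)) =o[nhdsWithin t J] (fun _ => (1:ℝ)) :=
          (isLittleO_one_iff ℝ).2 htend
        have h2 : (fun s : ℝ => ‖s - t‖) =O[nhdsWithin t J] (fun s => s - t) :=
          (isBigO_refl (fun s : ℝ => s - t) _).norm_left
        have h3 := h1.mul_isBigO h2
        have heq : ∀ s : ℝ, ‖s - t‖ ^ (r-1) * ‖s - t‖ = ‖s - t‖ ^ r := by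
          intro s
          have hrw : r = (r - 1) + 1 := by ring
          rw [hrw, Real.rpow_add' (norm_nonneg _) (by rw [← hrw]; linarith), Real.rpow_one]
          ring_nf
        refine (h3.congr' (Eventually.of_forall fun s => heq s)
          (Eventually.of_forall fun s => one_mul _))
      have hfinal := hO2.trans_isLittleO ho
      have key : ∀ s, ‖v s‖ ^ (l+2) = (‖v s‖ ^ (l+1)) ^ r := by
        intro s
        rw [← Real.rpow_mul (norm_nonneg _)]
        congr 1
        rw [hr]; field_simp [hl1.ne']
      rw [hasDerivWithinAt_iff_isLittleO]
      simp only [hvt, norm_zero, Real.zero_rpow hl2.ne', sub_zero, inner_zero_right,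
        mul_zero, smul_zero]
      exact hfinal.congr_left fun s => (key s).symm
    · -- v t ≠ 0 : chain rule
      have ha : (0:ℝ) < ‖v t‖ := norm_pos_iff.mpr hvt
      set q := (l+2)/(2*l+2) with hq
      have h2l : (0:ℝ) < 2*l+2 := by linarith
      have hgt : ∀ s, ⟪‖v s‖ ^ l • v s, ‖v s‖ ^ l • v s⟫ = ‖v s‖ ^ (2*l+2) := by
        intro s
        rw [real_inner_self_eq_norm_sq, hnψ, ← Real.rpow_natCast (‖v s‖ ^ (l+1)) 2,
          ← Real.rpow_mul (norm_nonneg _)]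
        congr 1
        push_cast
        ring
      have hgd := HasDerivWithinAt.inner ℝ (hψ t ht) (hψ t ht)
      have hne : ⟪‖v t‖ ^ l • v t, ‖v t‖ ^ l • v t⟫ ≠ 0 := by
        rw [hgt t]
        exact (Real.rpow_pos_of_pos ha _).ne'
      have hrp := hgd.rpow_const (p := q) (Or.inl hne)
      have hfun : (fun s => ⟪‖v s‖ ^ l • v s, ‖v s‖ ^ l • v s⟫ ^ q)
          = fun s => ‖v s‖ ^ (l+2) := by
        funext s
        rw [hgt, ← Real.rpow_mul (norm_nonneg _)]
        congr 1
        rw [hq]; field_simp [h2l.ne']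
      rw [← hfun]
      convert hrp using 1
      rw [hgt t, real_inner_smul_left, real_inner_smul_right,
        real_inner_comm (v t) (ψ' t), ← Real.rpow_mul (norm_nonneg _)]
      have hexp : (2*l+2)*(q-1) = -l := by
        rw [hq]; field_simp [h2l.ne']
        ring
      rw [hexp, Real.rpow_neg (norm_nonneg _)]
      have hal : ‖v t‖ ^ l ≠ 0 := (Real.rpow_pos_of_pos ha l).ne'
      rw [hq]; field_simp [h2l.ne']
      rw [real_inner_comm (ψ' t) (v t)]
      ring
  · intro t ht
    field_simp
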